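/- For every i ∈ V: An_low^{pa(i)}(i) = pa^B(i), the set of parents of i in the minimum max-linear DAG 𝒟^B; and for every z ∈ [0,∞)^d the recursive max-linear values x on 𝒟 satisfy x_i = max( max_{k ∈ pa^B(i)} (b_{ki}/b_{kk}) x_k , b_{ii} z_i ). -/

import Mathlib

open scoped NNReal ENNReal Classical

namespace MaxLinearDAG

variable {d : ℕ}

/-- `p` is a directed path (with at least one edge) from `j` to `i` in the edge relation `E`. -/
def PathFrom (E : Fin d → Fin d → Prop) (j i : Fin d) (p : List (Fin d)) : Prop :=
  2 ≤ p.length ∧ p.head? = some j ∧ p.getLast? = some i ∧ List.Chain' E p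

/-- The directed graph given by `E` is acyclic: no directed path from a node to itself. -/
def Acyclic (E : Fin d → Fin d → Prop) : Prop :=
  ∀ i, ¬ ∃ p, PathFrom E i i p

/-- `j` is an ancestor of `i`: there is a path from `j` to `i`. -/
def anc (E : Fin d → Fin d → Prop) (j i : Fin d) : Prop :=
  ∃ p, PathFrom E j i p

/-- The weight of a path `p` starting at `j`: `c j j` times the product of the
edge weights along `p`. -/
noncomputable def pathWeight (c : Fin d → Fin d → ℝ≥0) (j : Fin d) (p : List (Fin d)) : ℝ≥0 :=
  c j j * ((p.zip p.tail).map fun q => c q.1 q.2).prod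

/-- `b` is the max-linear coefficient matrix of the recursive ML model on `(E, c)`:
for `j ∈ an(i)`, `b j i` is the (attained) maximum of the path weights over all paths
from `j` to `i`; `b i i = c i i`; and `b j i = 0` for `j ∉ An(i)`. -/
def IsMLMatrix (E : Fin d → Fin d → Prop) (c b : Fin d → Fin d → ℝ≥0) : Prop :=
  (∀ i, b i i = c i i) ∧
  (∀ j i, j ≠ i → ¬ anc E j i → b j i = 0) ∧
  (∀ j i p, PathFrom E j i p → pathWeight c j p ≤ b j i) ∧
  (∀ j i, anc E j i → ∃ p, PathFrom E j i p ∧ pathWeight c j p = b j i)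

/-- `x` is the vector of recursive max-linear values on `(E, c)` for noise `z`:
`x i = max (max_{k ∈ pa(i)} c k i * x k) (c i i * z i)`, empty max being `0`. -/
def IsRecML (E : Fin d → Fin d → Prop) (c : Fin d → Fin d → ℝ≥0) (z x : Fin d → ℝ≥0) : Prop :=
  ∀ i, x i = (Finset.univ.sup fun k => if E k i then c k i * x k else 0) ⊔ c i i * z i

/-- Max-times matrix product `F ⊙ G`. -/
noncomputable def mprod (F G : Fin d → Fin d → ℝ≥0) : Fin d → Fin d → ℝ≥0 :=
  fun i j => Finset.univ.sup fun k => F i k * G k j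

/-- Max-times matrix power, `mpow A 0` being the identity matrix. -/
noncomputable def mpow (A : Fin d → Fin d → ℝ≥0) : ℕ → Fin d → Fin d → ℝ≥0
  | 0 => fun i j => if i = j then 1 else 0
  | n + 1 => mprod (mpow A n) A

/-- `p` is a max-weighted path from `j` to `i`. -/
def MaxWeighted (E : Fin d → Fin d → Prop) (c b : Fin d → Fin d → ℝ≥0)
    (j i : Fin d) (p : List (Fin d)) : Prop :=
  PathFrom E j i p ∧ pathWeight c j p = b j i

/-- The lowest max-weighted ancestors of `i` in `U`: nodes `j ∈ An(i) ∩ U` such that no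
max-weighted path from `j` to `i` passes through a node of `U \ {j}`. -/
def AnLow (E : Fin d → Fin d → Prop) (c b : Fin d → Fin d → ℝ≥0)
    (U : Set (Fin d)) (i : Fin d) : Set (Fin d) :=
  {j | (anc E j i ∨ j = i) ∧ j ∈ U ∧
    ∀ p, MaxWeighted E c b j i p → ¬ ∃ u ∈ U \ {j}, u ∈ p}

/-- The highest max-weighted descendants of `i` in `U`: nodes `l ∈ De(i) ∩ U` such that no
max-weighted path from `i` to `l` passes through a node of `U \ {l}`. -/
def DeHigh (E : Fin d → Fin d → Prop) (c b : Fin d → Fin d → ℝ≥0)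
    (U : Set (Fin d)) (i : Fin d) : Set (Fin d) :=
  {l | (anc E i l ∨ l = i) ∧ l ∈ U ∧
    ∀ p, MaxWeighted E c b i l p → ¬ ∃ u ∈ U \ {l}, u ∈ p}

/-! auxiliary -/

noncomputable def edgeProd (c : Fin d → Fin d → ℝ≥0) (p : List (Fin d)) : ℝ≥0 :=
  ((p.zip p.tail).map fun q => c q.1 q.2).prod

lemma pathWeight_eq (c : Fin d → Fin d → ℝ≥0) (j : Fin d) (p : List (Fin d)) :
    pathWeight c j p = c j j * edgeProd c p := rfl

@[simp] lemma edgeProd_singleton (c : Fin d → Fin d → ℝ≥0) (x : Fin d) :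
    edgeProd c [x] = 1 := by simp [edgeProd]

lemma edgeProd_cons (c : Fin d → Fin d → ℝ≥0) (x y : Fin d) (t : List (Fin d)) :
    edgeProd c (x :: y :: t) = c x y * edgeProd c (y :: t) := by
  simp [edgeProd]

lemma pathFrom_pair {E : Fin d → Fin d → Prop} {j i : Fin d} (h : E j i) :
    PathFrom E j i [j, i] := by
  refine ⟨by simp, by simp, by simp, ?_⟩
  exact List.isChain_cons_cons.2 ⟨h, by simp⟩

lemma anc_of_edge {E : Fin d → Fin d → Prop} {j i : Fin d} (h : E j i) : anc E j i :=
  ⟨[j, i], pathFrom_pair h⟩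

lemma not_edge_self {E : Fin d → Fin d → Prop} (hE : Acyclic E) (i : Fin d) : ¬ E i i :=
  fun h => hE i ⟨[i, i], pathFrom_pair h⟩

lemma edgeProd_pos {E : Fin d → Fin d → Prop} {c : Fin d → Fin d → ℝ≥0}
    (hce : ∀ k i, E k i → 0 < c k i) :
    ∀ p : List (Fin d), List.Chain' E p → 0 < edgeProd c p := by
  intro p
  induction p with
  | nil => intro _; simp [edgeProd]
  | cons a q ih =>
    rcases q with _ | ⟨y, t⟩
    · intro _; simp
    · intro hch
      have hch := List.isChain_cons_cons.1 hch
      rw [edgeProd_cons]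
      exact mul_pos (hce _ _ hch.1) (ih hch.2)

lemma pathWeight_pos {E : Fin d → Fin d → Prop} {c : Fin d → Fin d → ℝ≥0}
    (hcd : ∀ i, 0 < c i i) (hce : ∀ k i, E k i → 0 < c k i)
    {j i : Fin d} {p : List (Fin d)} (hp : PathFrom E j i p) : 0 < pathWeight c j p :=
  mul_pos (hcd j) (edgeProd_pos hce p hp.2.2.2)

lemma edgeProd_append (c : Fin d → Fin d → ℝ≥0) :
    ∀ (p : List (Fin d)) (l : Fin d) (r : List (Fin d)), p.getLast? = some l →
      edgeProd c (p ++ r) = edgeProd c p * edgeProd c (l :: r) := by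
  intro p
  induction p with
  | nil => intro l r h; simp at h
  | cons a q ih =>
    intro l r h
    rcases q with _ | ⟨y, t⟩
    · simp at h
      subst h
      simp
    · have h' : (y :: t).getLast? = some l := by
        simpa using h
      have hrec : edgeProd c (y :: (t ++ r)) = edgeProd c (y :: t) * edgeProd c (l :: r) :=
        ih l r h'
      show edgeProd c (a :: y :: (t ++ r)) = _
      rw [edgeProd_cons, hrec, edgeProd_cons c a y t, mul_assoc]

lemma pathFrom_append {E : Fin d → Fin d → Prop} (c : Fin d → Fin d → ℝ≥0)
    {j l i : Fin d} {p q : List (Fin d)}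
    (hp : PathFrom E j l p) (hq : PathFrom E l i q) :
    PathFrom E j i (p ++ q.tail) ∧
      edgeProd c (p ++ q.tail) = edgeProd c p * edgeProd c q := by
  obtain ⟨hl1, hh1, hg1, hc1⟩ := hp
  obtain ⟨hl2, hh2, hg2, hc2⟩ := hq
  rcases q with _ | ⟨a, q'⟩
  · simp at hh2
  have ha : a = l := by simpa using hh2
  subst ha
  rcases q' with _ | ⟨y, t⟩
  · simp at hl2
  have hEay : E a y := (List.isChain_cons_cons.1 hc2).1
  have htail : (a :: y :: t).tail = y :: t := rfl
  constructor
  · refine ⟨?_, ?_, ?_, ?_⟩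
    · rw [List.length_append]; omega
    · rcases p with _ | ⟨x, p'⟩
      · simp at hh1
      · simpa using hh1
    · rw [htail, List.getLast?_append]
      have hgy : (y :: t).getLast? = some i := by simpa using hg2
      simp [hgy]
    · refine List.IsChain.append hc1 hc2.tail ?_
      intro x hx y2 hy2
      rw [hg1] at hx
      have hx' : x = a := ((by simpa using hx : a = x)).symm
      have hy2' : y2 = y := ((by rw [htail] at hy2; simpa using hy2 : y = y2)).symm
      subst hx'
      subst hy2'
      exact hEay
  · rw [htail, edgeProd_append c p a (y :: t) hg1, edgeProd_cons]

lemma anc_trans {E : Fin d → Fin d → Prop} {j l i : Fin d}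
    (h1 : anc E j l) (h2 : anc E l i) : anc E j i := by
  obtain ⟨p, hp⟩ := h1
  obtain ⟨q, hq⟩ := h2
  exact ⟨p ++ q.tail, (pathFrom_append (fun _ _ => 1) hp hq).1⟩

lemma pathFrom_split {E : Fin d → Fin d → Prop} (c : Fin d → Fin d → ℝ≥0) :
    ∀ (p : List (Fin d)) (j i u : Fin d), PathFrom E j i p → u ∈ p → u ≠ j → u ≠ i →
      ∃ p1 p2, PathFrom E j u p1 ∧ PathFrom E u i p2 ∧
        edgeProd c p = edgeProd c p1 * edgeProd c p2 := by
  intro p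
  induction p with
  | nil => intro j i u hp _ _ _; exact absurd hp.1 (by simp)
  | cons a q ih =>
    intro j i u hp hu huj hui
    obtain ⟨hlen, hhead, hlast, hchain⟩ := hp
    have haj : a = j := by simpa using hhead
    subst haj
    rcases q with _ | ⟨y, t⟩
    · simp at hlen
    have hchain' := List.isChain_cons_cons.1 hchain
    have hu' : u ∈ y :: t := by
      rcases List.mem_cons.1 hu with h | h
      · exact absurd h huj
      · exact h
    have hlast' : (y :: t).getLast? = some i := by simpa using hlast
    by_cases huy : u = y
    · subst huy
      rcases t with _ | ⟨z, t'⟩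
      · simp at hlast'
        exact absurd hlast' hui
      refine ⟨[a, u], u :: z :: t', pathFrom_pair hchain'.1,
        ⟨by simp, by simp, hlast', hchain'.2⟩, ?_⟩
      rw [edgeProd_cons]
      simp [edgeProd_cons]
    · have hu'' : u ∈ t := by
        rcases List.mem_cons.1 hu' with h | h
        · exact absurd h huy
        · exact h
      have ht : t ≠ [] := by rintro rfl; simp at hu''
      have hpq : PathFrom E y i (y :: t) := by
        refine ⟨?_, rfl, hlast', hchain'.2⟩
        rcases t with _ | _
        · exact absurd rfl ht
        · simp
      obtain ⟨q1, q2, hq1, hq2, heq⟩ := ih y i u hpq hu' huy hui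
      obtain ⟨hl1, hh1, hg1, hc1⟩ := hq1
      rcases q1 with _ | ⟨w, q1'⟩
      · simp at hh1
      obtain rfl : w = y := by simpa using hh1
      refine ⟨a :: w :: q1', q2, ?_, hq2, ?_⟩
      · refine ⟨by simp, rfl, by simpa using hg1, ?_⟩
        exact List.isChain_cons_cons.2 ⟨hchain'.1, hc1⟩
      · rw [edgeProd_cons c a w t, heq, edgeProd_cons c a w q1', mul_assoc]


section
variable {E : Fin d → Fin d → Prop} {c b : Fin d → Fin d → ℝ≥0}

lemma b_pos (hcd : ∀ i, 0 < c i i) (hce : ∀ k i, E k i → 0 < c k i)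
    (hb : IsMLMatrix E c b) {j i : Fin d} (h : anc E j i) : 0 < b j i := by
  obtain ⟨p, hp⟩ := h
  exact lt_of_lt_of_le (pathWeight_pos hcd hce hp) (hb.2.2.1 j i p hp)

lemma edge_le {z x : Fin d → ℝ≥0} (hx : IsRecML E c z x) {a b' : Fin d} (h : E a b') :
    c a b' * x a ≤ x b' := by
  rw [hx b']
  refine le_sup_of_le_left ?_
  have := Finset.le_sup (f := fun k => if E k b' then c k b' * x k else 0) (Finset.mem_univ a)
  simpa [h] using this

lemma path_le {z x : Fin d → ℝ≥0} (hx : IsRecML E c z x) :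
    ∀ (p : List (Fin d)) (j i : Fin d), PathFrom E j i p → edgeProd c p * x j ≤ x i := by
  intro p
  induction p with
  | nil => intro j i hp; exact absurd hp.1 (by simp)
  | cons a q ih =>
    intro j i hp
    obtain ⟨hlen, hhead, hlast, hchain⟩ := hp
    obtain rfl : a = j := by simpa using hhead
    rcases q with _ | ⟨y, t⟩
    · simp at hlen
    have hch := List.isChain_cons_cons.1 hchain
    have hlast' : (y :: t).getLast? = some i := by simpa using hlast
    rcases t with _ | ⟨w, t'⟩
    · have hyi : y = i := by simpa using hlast'
      calc edgeProd c [a, y] * x a = c a y * x a := by simp [edgeProd_cons]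
        _ ≤ x y := edge_le hx hch.1
        _ = x i := by rw [hyi]
    · have hq : PathFrom E y i (y :: w :: t') := ⟨by simp, rfl, hlast', hch.2⟩
      have h1 : c a y * x a ≤ x y := edge_le hx hch.1
      calc edgeProd c (a :: y :: w :: t') * x a
          = edgeProd c (y :: w :: t') * (c a y * x a) := by
            rw [edgeProd_cons]; ring
        _ ≤ edgeProd c (y :: w :: t') * x y := mul_le_mul_right h1 _
        _ ≤ x i := ih y i hq

lemma anc_div_le (hcd : ∀ i, 0 < c i i) (hb : IsMLMatrix E c b) {z x : Fin d → ℝ≥0}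
    (hx : IsRecML E c z x) {j i : Fin d} (h : anc E j i) :
    (b j i / b j j) * x j ≤ x i := by
  obtain ⟨p, hp, hw⟩ := hb.2.2.2 j i h
  have hEdge : b j i / b j j = edgeProd c p := by
    rw [hb.1 j, eq_comm, eq_div_iff_mul_eq (hcd j).ne', mul_comm]
    rw [pathWeight_eq] at hw
    exact hw
  rw [hEdge]
  exact path_le hx p j i hp

noncomputable def descCard (E : Fin d → Fin d → Prop) (k : Fin d) : ℕ :=
  (Finset.univ.filter fun l => anc E k l).card

lemma descCard_lt (hE : Acyclic E) {k l : Fin d} (h : anc E k l) :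
    descCard E l < descCard E k := by
  apply Finset.card_lt_card
  rw [Finset.ssubset_def]
  constructor
  · intro m hm
    simp only [Finset.mem_filter, Finset.mem_univ, true_and] at *
    exact anc_trans h hm
  · intro hsub
    have hl : l ∈ Finset.univ.filter fun m => anc E k m := by simp [h]
    have := hsub hl
    simp only [Finset.mem_filter, Finset.mem_univ, true_and] at this
    exact hE l this

end


/-- For every `i ∈ V`: `An_low^{pa(i)}(i) = pa^B(i)`, the set of parents of
`i` in the minimum max-linear DAG `𝒟^B`; and for every `z` the recursive max-linear values
`x` on `𝒟` satisfy `x i = max (max_{k ∈ pa^B(i)} (b k i / b k k) * x k) (b i i * z i)`. -/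
theorem stmt19 {d : ℕ} (hd : 1 ≤ d) (E : Fin d → Fin d → Prop) (hE : Acyclic E)
    (c : Fin d → Fin d → ℝ≥0) (hcd : ∀ i, 0 < c i i) (hce : ∀ k i, E k i → 0 < c k i)
    (b : Fin d → Fin d → ℝ≥0) (hb : IsMLMatrix E c b) (i : Fin d) :
    let paB : Set (Fin d) := {k | E k i ∧
      (Finset.univ.sup fun l =>
        if anc E k l ∧ E l i then b k l * b l i / b l l else 0) < b k i}
    AnLow E c b {k | E k i} i = paB ∧
    ∀ z x : Fin d → ℝ≥0, IsRecML E c z x →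
      x i = (Finset.univ.sup fun k => if k ∈ paB then (b k i / b k k) * x k else 0) ⊔
        b i i * z i := by
  intro paB
  have hbkk : ∀ k, b k k = c k k := hb.1
  have hbkkpos : ∀ k, (0:ℝ≥0) < b k k := fun k => by rw [hbkk]; exact hcd k
  have hedge_le_b : ∀ k, E k i → c k k * c k i ≤ b k i := by
    intro k hk
    have := hb.2.2.1 k i [k, i] (pathFrom_pair hk)
    calc c k k * c k i = pathWeight c k [k, i] := by
          rw [pathWeight_eq]; simp [edgeProd_cons]
      _ ≤ b k i := this
  have hbpos : ∀ j l, anc E j l → 0 < b j l := fun j l h => b_pos hcd hce hb h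
  have hEii : ¬ E i i := not_edge_self hE i
  constructor
  · ext k
    simp only [AnLow, Set.mem_setOf_eq, paB]
    constructor
    · rintro ⟨hanc, hki, hnp⟩
      refine ⟨hki, ?_⟩
      have hbk : 0 < b k i := hbpos k i (anc_of_edge hki)
      rw [Finset.sup_lt_iff (show (⊥:ℝ≥0) < b k i from hbk)]
      intro l _
      split_ifs with hl
      · by_contra hge
        push_neg at hge
        obtain ⟨hkl, hli⟩ := hl
        obtain ⟨p1, hp1, hw1⟩ := hb.2.2.2 k l hkl
        obtain ⟨p2, hp2, hw2⟩ := hb.2.2.2 l i (anc_of_edge hli)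
        obtain ⟨hppath, hpe⟩ := pathFrom_append c hp1 hp2
        have hbll : (0:ℝ≥0) < b l l := hbkkpos l
        have hw : pathWeight c k (p1 ++ p2.tail) * b l l = b k l * b l i := by
          rw [pathWeight_eq, hpe, ← hw1, ← hw2, pathWeight_eq, pathWeight_eq, hbkk]
          ring
        have hle : pathWeight c k (p1 ++ p2.tail) ≤ b k i := hb.2.2.1 k i _ hppath
        have hge' : b k i * b l l ≤ pathWeight c k (p1 ++ p2.tail) * b l l := by
          rw [hw]
          exact (le_div_iff₀ hbll).1 hge
        have heq : pathWeight c k (p1 ++ p2.tail) = b k i :=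
          le_antisymm hle (le_of_mul_le_mul_right hge' hbll)
        have hlk : l ≠ k := by
          rintro rfl
          exact hE l ⟨p1, hp1⟩
        have hlmem : l ∈ p1 ++ p2.tail :=
          List.mem_append_left _ (List.mem_of_getLast? hp1.2.2.1)
        exact hnp (p1 ++ p2.tail) ⟨hppath, heq⟩ ⟨l, ⟨hli, by simpa using hlk⟩, hlmem⟩
      · exact hbk
    · rintro ⟨hki, hsup⟩
      refine ⟨Or.inl (anc_of_edge hki), hki, ?_⟩
      rintro p ⟨hppath, hpw⟩ ⟨u, ⟨hui, hunk⟩, hup⟩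
      have huk : u ≠ k := by simpa using hunk
      have huneqi : u ≠ i := fun h => hEii (h ▸ hui)
      obtain ⟨p1, p2, hp1, hp2, hsplit⟩ := pathFrom_split c p k i u hppath hup huk huneqi
      have hbuu : (0:ℝ≥0) < b u u := hbkkpos u
      have h1 : pathWeight c k p1 ≤ b k u := hb.2.2.1 _ _ _ hp1
      have h2 : pathWeight c u p2 ≤ b u i := hb.2.2.1 _ _ _ hp2
      have hkey : b k i * b u u ≤ b k u * b u i := by
        have hh : pathWeight c k p * c u u = pathWeight c k p1 * pathWeight c u p2 := by
          rw [pathWeight_eq, pathWeight_eq, pathWeight_eq, hsplit]; ring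
        calc b k i * b u u = pathWeight c k p * c u u := by rw [hpw, hbkk]
          _ = pathWeight c k p1 * pathWeight c u p2 := hh
          _ ≤ b k u * b u i := mul_le_mul' h1 h2
      have hanc_ku : anc E k u := ⟨p1, hp1⟩
      have hlt : (if anc E k u ∧ E u i then b k u * b u i / b u u else 0) < b k i :=
        lt_of_le_of_lt (Finset.le_sup (f := fun l =>
          if anc E k l ∧ E l i then b k l * b l i / b l l else 0) (Finset.mem_univ u)) hsup
      rw [if_pos ⟨hanc_ku, hui⟩] at hlt
      exact absurd hlt (not_lt.2 ((le_div_iff₀ hbuu).2 hkey))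
  · intro z x hx
    set S := Finset.univ.sup fun k => if k ∈ paB then (b k i / b k k) * x k else 0 with hS
    have key : ∀ n (k : Fin d), descCard E k = n → E k i → (b k i / b k k) * x k ≤ S := by
      intro n
      induction n using Nat.strong_induction_on with
      | _ n ih =>
        intro k hn hki
        by_cases hkB : k ∈ paB
        · calc (b k i / b k k) * x k
              = (if k ∈ paB then (b k i / b k k) * x k else 0) := by rw [if_pos hkB]
            _ ≤ S := by
              rw [hS]
              exact Finset.le_sup (f := fun k => if k ∈ paB then (b k i / b k k) * x k else 0)
                (Finset.mem_univ k)
        · have hnotlt : ¬ ((Finset.univ.sup fun l =>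
              if anc E k l ∧ E l i then b k l * b l i / b l l else 0) < b k i) := by
            intro h
            exact hkB ⟨hki, h⟩
          push_neg at hnotlt
          obtain ⟨l, _, hl⟩ := Finset.exists_mem_eq_sup Finset.univ
            ⟨i, Finset.mem_univ i⟩
            (fun l => if anc E k l ∧ E l i then b k l * b l i / b l l else 0)
          rw [hl] at hnotlt
          have hbk : 0 < b k i := hbpos k i (anc_of_edge hki)
          have hcond : anc E k l ∧ E l i := by
            by_contra hc
            rw [if_neg hc] at hnotlt
            exact absurd hnotlt (not_le.2 hbk)
          rw [if_pos hcond] at hnotlt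
          obtain ⟨hkl, hli⟩ := hcond
          have hmul : b k i * b l l ≤ b k l * b l i := (le_div_iff₀ (hbkkpos l)).1 hnotlt
          have hxl : (b k l / b k k) * x k ≤ x l := anc_div_le hcd hb hx hkl
          have harith : b k i / b k k ≤ (b l i / b l l) * (b k l / b k k) := by
            rw [div_mul_div_comm, div_le_div_iff₀ (hbkkpos k) (mul_pos (hbkkpos l) (hbkkpos k))]
            calc b k i * (b l l * b k k) = (b k i * b l l) * b k k := by ring
              _ ≤ (b k l * b l i) * b k k := mul_le_mul_left hmul _
              _ = (b l i * b k l) * b k k := by ring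
          have step : (b k i / b k k) * x k ≤ (b l i / b l l) * x l := by
            calc (b k i / b k k) * x k
                ≤ ((b l i / b l l) * (b k l / b k k)) * x k := mul_le_mul_left harith _
              _ = (b l i / b l l) * ((b k l / b k k) * x k) := by ring
              _ ≤ (b l i / b l l) * x l := mul_le_mul_right hxl _
          have hltn : descCard E l < n := hn ▸ descCard_lt hE hkl
          exact le_trans step (ih _ hltn l rfl hli)
    apply le_antisymm
    · rw [hx i]
      apply sup_le_sup
      · apply Finset.sup_le
        intro k _
        split_ifs with hk
        · have h1 : c k i ≤ b k i / b k k := by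
            rw [le_div_iff₀ (hbkkpos k)]
            calc c k i * b k k = c k k * c k i := by rw [hbkk]; ring
              _ ≤ b k i := hedge_le_b k hk
          exact le_trans (mul_le_mul_left h1 (x k)) (key _ k rfl hk)
        · exact zero_le
      · exact le_of_eq (by rw [hbkk])
    · apply sup_le
      · apply Finset.sup_le
        intro k _
        split_ifs with hk
        · exact anc_div_le hcd hb hx (anc_of_edge hk.1)
        · exact zero_le
      · rw [hbkk, hx i]
        exact le_sup_right

end MaxLinearDAG
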